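/- Let k ≥ 2 and let X_1, …, X_k be random variables on a common probability space taking values in [−1, 1]. Suppose there is Δ ≥ 0 such that: (i) |E[X_i] − E[X_k]| ≤ Δ for all i; (ii) |E[X_i²] − E[X_k²]| ≤ Δ for all i; and (iii) |Cov(X_i, X_j)| ≤ Δ for all i ≠ j. Let μ̂ = (1/k) Σ_{i=1}^k X_i and let S = (1/(k−1)) Σ_{i=1}^k (X_i − μ̂)² be the sample variance. Then |E[S] − Var(X_k)| ≤ 4Δ. -/

import Mathlib

open MeasureTheory ProbabilityTheory

private lemma sum_split_offDiag' {k : ℕ} (f : Fin k → Fin k → ℝ) :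
    ∑ i, ∑ j, f i j
      = (∑ i, f i i) + ∑ p ∈ (Finset.univ : Finset (Fin k)).offDiag, f p.1 p.2 := by
  have h := Finset.sum_finset_product' (Finset.univ : Finset (Fin k)).offDiag Finset.univ
    (fun i => Finset.univ.erase i)
    (fun p => by simp [Finset.mem_offDiag, ne_comm]) (f := f)
  rw [h, ← Finset.sum_add_distrib]
  refine Finset.sum_congr rfl fun i _ => ?_
  rw [Finset.add_sum_erase _ (f i) (Finset.mem_univ i)]

private lemma aux_arith {k : ℕ} (hk : 2 ≤ k) (m s : Fin k → ℝ) (q : Fin k → Fin k → ℝ)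
    (L : Fin k) (Δ : ℝ) (hΔ : 0 ≤ Δ)
    (hm1 : ∀ i, |m i| ≤ 1)
    (hs : ∀ i, |s i - s L| ≤ Δ)
    (hmm : ∀ i, |m i - m L| ≤ Δ)
    (hqd : ∀ i, q i i = s i)
    (hc : ∀ i j, i ≠ j → |q i j - m i * m j| ≤ Δ) :
    |(1/((k:ℝ)-1)) * ((∑ i, s i) - (1/(k:ℝ)) * ∑ i, ∑ j, q i j) - (s L - m L ^ 2)| ≤ 4 * Δ := by
  have hk2 : (2:ℝ) ≤ (k:ℝ) := by exact_mod_cast hk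
  have hkpos : (0:ℝ) < (k:ℝ) := by linarith
  have hk1pos : (0:ℝ) < (k:ℝ) - 1 := by linarith
  have hppos : (0:ℝ) < (k:ℝ) * ((k:ℝ) - 1) := mul_pos hkpos hk1pos
  have hk0 : (k:ℝ) ≠ 0 := ne_of_gt hkpos
  have hk1 : (k:ℝ) - 1 ≠ 0 := ne_of_gt hk1pos
  set od := (Finset.univ : Finset (Fin k)).offDiag with hod
  have hcard : ((od.card : ℕ) : ℝ) = (k:ℝ) * ((k:ℝ) - 1) := by
    rw [hod, Finset.offDiag_card, Finset.card_univ, Fintype.card_fin]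
    have hle : k ≤ k * k := Nat.le_mul_of_pos_left _ (by omega)
    push_cast [hle]
    ring
  have key : (1/((k:ℝ)-1)) * ((∑ i, s i) - (1/(k:ℝ)) * ∑ i, ∑ j, q i j) - (s L - m L ^ 2)
      = (1/(k:ℝ)) * (∑ i, (s i - s L))
        + (1/((k:ℝ)*((k:ℝ)-1))) * (∑ p ∈ od, (m L ^ 2 - m p.1 * m p.2))
        + (1/((k:ℝ)*((k:ℝ)-1))) * (∑ p ∈ od, (m p.1 * m p.2 - q p.1 p.2)) := by
    have hsplit := sum_split_offDiag' q
    simp only [hqd] at hsplit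
    rw [hsplit, Finset.sum_sub_distrib, Finset.sum_sub_distrib, Finset.sum_sub_distrib,
      Finset.sum_const, Finset.sum_const, Finset.card_univ, Fintype.card_fin,
      nsmul_eq_mul, nsmul_eq_mul, hcard]
    field_simp
    ring
  rw [key]
  have hb1 : |(1/(k:ℝ)) * (∑ i, (s i - s L))| ≤ Δ := by
    rw [abs_mul, abs_of_pos (by positivity : (0:ℝ) < 1/(k:ℝ))]
    have h1 : |∑ i, (s i - s L)| ≤ ∑ _i : Fin k, Δ :=
      (Finset.abs_sum_le_sum_abs _ _).trans (Finset.sum_le_sum fun i _ => hs i)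
    rw [Finset.sum_const, Finset.card_univ, Fintype.card_fin, nsmul_eq_mul] at h1
    calc (1/(k:ℝ)) * |∑ i, (s i - s L)| ≤ (1/(k:ℝ)) * ((k:ℝ) * Δ) :=
          mul_le_mul_of_nonneg_left h1 (by positivity)
      _ = Δ := by field_simp
  have hb2 : |(1/((k:ℝ)*((k:ℝ)-1))) * (∑ p ∈ od, (m L ^ 2 - m p.1 * m p.2))| ≤ 2 * Δ := by
    rw [abs_mul, abs_of_pos (one_div_pos.mpr hppos)]
    have h1 : |∑ p ∈ od, (m L ^ 2 - m p.1 * m p.2)| ≤ ∑ _p ∈ od, 2 * Δ := by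
      refine (Finset.abs_sum_le_sum_abs _ _).trans (Finset.sum_le_sum fun p _ => ?_)
      have e : m L ^ 2 - m p.1 * m p.2 = (m L - m p.1) * m L + m p.1 * (m L - m p.2) := by ring
      rw [e]
      calc |(m L - m p.1) * m L + m p.1 * (m L - m p.2)|
          ≤ |(m L - m p.1) * m L| + |m p.1 * (m L - m p.2)| := abs_add_le _ _
        _ = |m L - m p.1| * |m L| + |m p.1| * |m L - m p.2| := by rw [abs_mul, abs_mul]
        _ ≤ Δ * 1 + 1 * Δ :=
            add_le_add
              (mul_le_mul (abs_sub_comm (m L) (m p.1) ▸ hmm p.1) (hm1 L) (abs_nonneg _) hΔ)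
              (mul_le_mul (hm1 p.1) (abs_sub_comm (m L) (m p.2) ▸ hmm p.2) (abs_nonneg _)
                zero_le_one)
        _ = 2 * Δ := by ring
    rw [Finset.sum_const, nsmul_eq_mul] at h1
    calc (1/((k:ℝ)*((k:ℝ)-1))) * |∑ p ∈ od, (m L ^ 2 - m p.1 * m p.2)|
        ≤ (1/((k:ℝ)*((k:ℝ)-1))) * ((od.card : ℝ) * (2*Δ)) :=
          mul_le_mul_of_nonneg_left h1 (le_of_lt (one_div_pos.mpr hppos))
      _ = 2 * Δ := by rw [hcard]; field_simp
  have hb3 : |(1/((k:ℝ)*((k:ℝ)-1))) * (∑ p ∈ od, (m p.1 * m p.2 - q p.1 p.2))| ≤ Δ := by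
    rw [abs_mul, abs_of_pos (one_div_pos.mpr hppos)]
    have h1 : |∑ p ∈ od, (m p.1 * m p.2 - q p.1 p.2)| ≤ ∑ _p ∈ od, Δ := by
      refine (Finset.abs_sum_le_sum_abs _ _).trans (Finset.sum_le_sum fun p hp => ?_)
      rw [abs_sub_comm]
      exact hc p.1 p.2 (Finset.mem_offDiag.mp hp).2.2
    rw [Finset.sum_const, nsmul_eq_mul] at h1
    calc (1/((k:ℝ)*((k:ℝ)-1))) * |∑ p ∈ od, (m p.1 * m p.2 - q p.1 p.2)|
        ≤ (1/((k:ℝ)*((k:ℝ)-1))) * ((od.card : ℝ) * Δ) :=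
          mul_le_mul_of_nonneg_left h1 (le_of_lt (one_div_pos.mpr hppos))
      _ = Δ := by rw [hcard]; field_simp
  calc |(1/(k:ℝ)) * (∑ i, (s i - s L))
        + (1/((k:ℝ)*((k:ℝ)-1))) * (∑ p ∈ od, (m L ^ 2 - m p.1 * m p.2))
        + (1/((k:ℝ)*((k:ℝ)-1))) * (∑ p ∈ od, (m p.1 * m p.2 - q p.1 p.2))|
      ≤ |(1/(k:ℝ)) * (∑ i, (s i - s L))
        + (1/((k:ℝ)*((k:ℝ)-1))) * (∑ p ∈ od, (m L ^ 2 - m p.1 * m p.2))|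
        + |(1/((k:ℝ)*((k:ℝ)-1))) * (∑ p ∈ od, (m p.1 * m p.2 - q p.1 p.2))| := abs_add_le _ _
    _ ≤ (|(1/(k:ℝ)) * (∑ i, (s i - s L))|
        + |(1/((k:ℝ)*((k:ℝ)-1))) * (∑ p ∈ od, (m L ^ 2 - m p.1 * m p.2))|)
        + |(1/((k:ℝ)*((k:ℝ)-1))) * (∑ p ∈ od, (m p.1 * m p.2 - q p.1 p.2))| := by
          gcongr; exact abs_add_le _ _
    _ ≤ 4 * Δ := by linarith

/-- **The expected sample variance of nearly-identical, nearly-uncorrelated random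
variables approximates the variance of the last one.** Let `k ≥ 2` and let
`X_1, …, X_k` be random variables taking values in `[−1, 1]` such that, for some `Δ ≥ 0`:
(i) `|E[X_i] − E[X_k]| ≤ Δ` for all `i`; (ii) `|E[X_i²] − E[X_k²]| ≤ Δ` for all `i`;
(iii) `|Cov(X_i, X_j)| ≤ Δ` for all `i ≠ j`. Then, for the sample variance
`S = (1/(k−1)) Σ_i (X_i − μ̂)²` with `μ̂ = (1/k) Σ_i X_i`, one has
`|E[S] − Var(X_k)| ≤ 4Δ`. -/
theorem abs_expected_sample_variance_sub_variance_le
    {Ω : Type*} [MeasurableSpace Ω] (P : Measure Ω) [IsProbabilityMeasure P]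
    (k : ℕ) (hk : 2 ≤ k) (X : Fin k → Ω → ℝ)
    (hmeas : ∀ i, Measurable (X i))
    (hbdd : ∀ i ω, X i ω ∈ Set.Icc (-1 : ℝ) 1)
    (last : Fin k) (hlast : (last : ℕ) = k - 1)
    (Δ : ℝ) (hΔ : 0 ≤ Δ)
    (hmean : ∀ i, |(∫ ω, X i ω ∂P) - ∫ ω, X last ω ∂P| ≤ Δ)
    (hsecond : ∀ i, |(∫ ω, (X i ω) ^ 2 ∂P) - ∫ ω, (X last ω) ^ 2 ∂P| ≤ Δ)
    (hcov : ∀ i j, i ≠ j →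
      |∫ ω, (X i ω - ∫ x, X i x ∂P) * (X j ω - ∫ x, X j x ∂P) ∂P| ≤ Δ) :
    |(∫ ω, (1 / ((k : ℝ) - 1)) *
        ∑ i, (X i ω - (1 / (k : ℝ)) * ∑ j, X j ω) ^ 2 ∂P)
      - variance (X last) P| ≤ 4 * Δ := by
  have hk2 : (2:ℝ) ≤ (k:ℝ) := by exact_mod_cast hk
  have hk0 : (k:ℝ) ≠ 0 := by linarith
  have hk1 : (k:ℝ) - 1 ≠ 0 := by linarith
  have habs : ∀ i ω, |X i ω| ≤ 1 := fun i ω => abs_le.mpr ⟨(hbdd i ω).1, (hbdd i ω).2⟩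
  have hint : ∀ i, Integrable (X i) P := fun i =>
    (integrable_const (1:ℝ)).mono' (hmeas i).aestronglyMeasurable
      (Filter.Eventually.of_forall fun ω => by
        rw [Real.norm_eq_abs]; exact habs i ω)
  have hintmul : ∀ i j, Integrable (fun ω => X i ω * X j ω) P := fun i j =>
    (integrable_const (1:ℝ)).mono' ((hmeas i).mul (hmeas j)).aestronglyMeasurable
      (Filter.Eventually.of_forall fun ω => by
        rw [Real.norm_eq_abs, abs_mul]
        exact mul_le_one₀ (habs i ω) (abs_nonneg _) (habs j ω))
  have hintsq : ∀ i, Integrable (fun ω => (X i ω) ^ 2) P := fun i => by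
    simpa [sq] using hintmul i i
  -- covariance identity
  have hqmm : ∀ i j, (∫ ω, X i ω * X j ω ∂P) - (∫ ω, X i ω ∂P) * (∫ ω, X j ω ∂P)
      = ∫ ω, (X i ω - ∫ x, X i x ∂P) * (X j ω - ∫ x, X j x ∂P) ∂P := by
    intro i j
    have hpt : ∀ ω, (X i ω - ∫ x, X i x ∂P) * (X j ω - ∫ x, X j x ∂P)
        = X i ω * X j ω - (∫ x, X i x ∂P) * X j ω
          - (∫ x, X j x ∂P) * X i ω + (∫ x, X i x ∂P) * (∫ x, X j x ∂P) := fun ω => by ring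
    have Ic1 : Integrable (fun ω => (∫ x, X i x ∂P) * X j ω) P := (hint j).const_mul _
    have Ic2 : Integrable (fun ω => (∫ x, X j x ∂P) * X i ω) P := (hint i).const_mul _
    have I1 : Integrable (fun ω => X i ω * X j ω - (∫ x, X i x ∂P) * X j ω) P :=
      (hintmul i j).sub Ic1
    have I2 : Integrable (fun ω => X i ω * X j ω - (∫ x, X i x ∂P) * X j ω
        - (∫ x, X j x ∂P) * X i ω) P := I1.sub Ic2
    rw [show (fun ω => (X i ω - ∫ x, X i x ∂P) * (X j ω - ∫ x, X j x ∂P)) =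
        fun ω => X i ω * X j ω - (∫ x, X i x ∂P) * X j ω
          - (∫ x, X j x ∂P) * X i ω + (∫ x, X i x ∂P) * (∫ x, X j x ∂P) from funext hpt]
    rw [integral_add I2 (integrable_const _), integral_sub I1 Ic2,
      integral_sub (hintmul i j) Ic1,
      integral_const_mul, integral_const_mul, integral_const]
    simp [measure_univ]
    ring
  -- variance formula
  have hmem2 : MemLp (X last) 2 P :=
    (memLp_top_of_bound (hmeas last).aestronglyMeasurable 1
      (Filter.Eventually.of_forall fun ω => by
        rw [Real.norm_eq_abs]; exact habs last ω)).mono_exponent le_top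
  have hvar : variance (X last) P = (∫ ω, (X last ω) ^ 2 ∂P) - (∫ ω, X last ω ∂P) ^ 2 := by
    rw [variance_eq_sub hmem2]
    simp [Pi.pow_apply]
  -- |mean| ≤ 1
  have hm1 : ∀ i, |∫ ω, X i ω ∂P| ≤ 1 := fun i => by
    calc |∫ ω, X i ω ∂P| ≤ ∫ ω, |X i ω| ∂P := by
          simpa [Real.norm_eq_abs] using norm_integral_le_integral_norm (X i) (μ := P)
      _ ≤ ∫ _ω, (1:ℝ) ∂P := integral_mono (hint i).abs (integrable_const 1) (fun ω => habs i ω)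
      _ = 1 := by simp
  -- pointwise expansion of the sample variance
  have hpt2 : ∀ ω, (1 / ((k:ℝ) - 1)) * ∑ i, (X i ω - (1 / (k:ℝ)) * ∑ j, X j ω) ^ 2
      = (1 / ((k:ℝ) - 1)) *
          ((∑ i, (X i ω) ^ 2) - (1/(k:ℝ)) * ∑ i, ∑ j, X i ω * X j ω) := by
    intro ω
    have hT : ∑ i, ∑ j, X i ω * X j ω = (∑ j, X j ω) * (∑ j, X j ω) :=
      (Finset.sum_mul_sum _ _ _ _).symm
    have hexp : ∑ i, (X i ω - (1/(k:ℝ)) * ∑ j, X j ω) ^ 2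
        = ∑ i, ((X i ω) ^ 2 - (2/(k:ℝ)) * (∑ j, X j ω) * X i ω
            + (1/(k:ℝ))^2 * ((∑ j, X j ω) * (∑ j, X j ω))) :=
      Finset.sum_congr rfl fun i _ => by ring
    rw [hT, hexp, Finset.sum_add_distrib, Finset.sum_sub_distrib, ← Finset.mul_sum,
      Finset.sum_const, Finset.card_univ, Fintype.card_fin, nsmul_eq_mul]
    field_simp
    ring
  have hintsum1 : Integrable (fun ω => ∑ i, (X i ω) ^ 2) P :=
    integrable_finset_sum _ fun i _ => hintsq i
  have hintsum2 : Integrable (fun ω => ∑ i, ∑ j, X i ω * X j ω) P :=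
    integrable_finset_sum _ fun i _ => integrable_finset_sum _ fun j _ => hintmul i j
  have hintsum2' : Integrable (fun ω => (1/(k:ℝ)) * ∑ i, ∑ j, X i ω * X j ω) P :=
    hintsum2.const_mul _
  have hEq : (∫ ω, (1 / ((k:ℝ) - 1)) *
        ∑ i, (X i ω - (1 / (k:ℝ)) * ∑ j, X j ω) ^ 2 ∂P)
      = (1 / ((k:ℝ) - 1)) * ((∑ i, ∫ ω, (X i ω) ^ 2 ∂P)
          - (1/(k:ℝ)) * ∑ i, ∑ j, ∫ ω, X i ω * X j ω ∂P) := by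
    rw [show (fun ω => (1 / ((k:ℝ) - 1)) * ∑ i, (X i ω - (1 / (k:ℝ)) * ∑ j, X j ω) ^ 2)
        = fun ω => (1 / ((k:ℝ) - 1)) *
          ((∑ i, (X i ω) ^ 2) - (1/(k:ℝ)) * ∑ i, ∑ j, X i ω * X j ω) from funext hpt2]
    rw [integral_const_mul, integral_sub hintsum1 hintsum2', integral_const_mul,
      integral_finset_sum _ (fun i _ => hintsq i),
      integral_finset_sum _ (fun i _ => integrable_finset_sum _ fun j _ => hintmul i j)]
    congr 3
    exact Finset.sum_congr rfl fun i _ => integral_finset_sum _ (fun j _ => hintmul i j)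
  rw [hEq, hvar]
  refine aux_arith hk (fun i => ∫ ω, X i ω ∂P) (fun i => ∫ ω, (X i ω) ^ 2 ∂P)
    (fun i j => ∫ ω, X i ω * X j ω ∂P) last Δ hΔ hm1 hsecond hmean ?_ ?_
  · intro i
    show (∫ ω, X i ω * X i ω ∂P) = ∫ ω, (X i ω) ^ 2 ∂P
    rw [show (fun ω => X i ω * X i ω) = fun ω => (X i ω) ^ 2 from
      funext fun ω => (pow_two _).symm]
  · intro i j hij
    rw [hqmm i j]
    exact hcov i j hij
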